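/- If S is a μ-preserving m-transformation, then the Koopman operator U, Uf(x) = (1/|S(x)|) Σ_{y∈S(x)} f(y), is a positive linear contraction on L^p(μ) for every 1 ≤ p ≤ ∞, i.e., ‖Uf‖_p ≤ ‖f‖_p. -/

import Mathlib

open MeasureTheory Set Filter Finset
open scoped ENNReal Classical

noncomputable section

/-- The stochastic kernel of a finite-multivalued transformation `S`:
`K(x,B) = |S(x) ∩ B| / |S(x)|`, valued in `ℝ≥0∞`. -/
def fker {X : Type*} (S : X → Finset X) (x : X) (B : Set X) : ℝ≥0∞ :=
  (((S x).filter (fun y => y ∈ B)).card : ℝ≥0∞) / ((S x).card : ℝ≥0∞)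

/-- The set `S⁻¹_{k;l}(B) = {x : |S(x)| = k, |S(x) ∩ B| = l}`. -/
def preimKL {X : Type*} (S : X → Finset X) (k l : ℕ) (B : Set X) : Set X :=
  {x | (S x).card = k ∧ ((S x).filter (fun y => y ∈ B)).card = l}

/-- The full preimage `S⁻¹(B) = {x : S(x) ∩ B ≠ ∅}`. -/
def fullPre {X : Type*} (S : X → Finset X) (B : Set X) : Set X :=
  {x | ∃ y ∈ S x, y ∈ B}

/-- The Koopman operator `Uf(x) = (1/|S(x)|) ∑_{y ∈ S(x)} f(y)`. -/
def koop {X : Type*} (S : X → Finset X) (f : X → ℝ) (x : X) : ℝ :=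
  (∑ y ∈ S x, f y) / ((S x).card : ℝ)

namespace KoopAux

open scoped NNReal

variable {X : Type*} [MeasurableSpace X] {μ : Measure X} {S : X → Finset X}

/-- The transfer operator on nonnegative functions. -/
def T (S : X → Finset X) (g : X → ℝ≥0∞) (x : X) : ℝ≥0∞ :=
  (∑ y ∈ S x, g y) / ((S x).card : ℝ≥0∞)

lemma meas_card (hmeas : ∀ B : Set X, MeasurableSet B → ∀ k l : ℕ,
    MeasurableSet (preimKL S k l B)) :
    Measurable (fun x => (S x).card) := by
  apply measurable_to_countable'
  intro k
  have : (fun x => (S x).card) ⁻¹' {k} = preimKL S k k univ := by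
    ext x
    simp [preimKL, Finset.filter_true_of_mem]
  rw [this]
  exact hmeas univ MeasurableSet.univ k k

lemma meas_fcard {B : Set X} (hB : MeasurableSet B)
    (hmeas : ∀ B : Set X, MeasurableSet B → ∀ k l : ℕ,
      MeasurableSet (preimKL S k l B)) :
    Measurable (fun x => ((S x).filter (fun y => y ∈ B)).card) := by
  apply measurable_to_countable'
  intro l
  have : (fun x => ((S x).filter (fun y => y ∈ B)).card) ⁻¹' {l} =
      ⋃ k : ℕ, preimKL S k l B := by
    ext x
    simp only [Set.mem_preimage, Set.mem_singleton_iff, Set.mem_iUnion, preimKL,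
      Set.mem_setOf_eq]
    exact ⟨fun h => ⟨(S x).card, rfl, h⟩, fun ⟨k, _, h⟩ => h⟩
  rw [this]
  exact MeasurableSet.iUnion fun k => hmeas B hB k l

lemma meas_fker {B : Set X} (hB : MeasurableSet B)
    (hmeas : ∀ B : Set X, MeasurableSet B → ∀ k l : ℕ,
      MeasurableSet (preimKL S k l B)) :
    Measurable (fun x => fker S x B) := by
  have h1 : Measurable (fun x => (((S x).filter (fun y => y ∈ B)).card : ℝ≥0∞)) :=
    (measurable_from_top).comp (meas_fcard hB hmeas)
  have h2 : Measurable (fun x => ((S x).card : ℝ≥0∞)) :=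
    (measurable_from_top).comp (meas_card hmeas)
  exact h1.div h2

lemma card_ne_zero {m : ℕ} (hcard : ∀ x, 1 ≤ (S x).card ∧ (S x).card ≤ m) (x : X) :
    ((S x).card : ℝ≥0∞) ≠ 0 := by
  have := (hcard x).1
  simp only [ne_eq, Nat.cast_eq_zero]
  omega

lemma T_indicator (c : ℝ≥0∞) (B : Set X) :
    T S (Set.indicator B fun _ => c) = fun x => c * fker S x B := by
  funext x
  have : ∑ y ∈ S x, Set.indicator B (fun _ => c) y
      = ((S x).filter (fun y => y ∈ B)).card * c := by
    rw [Finset.sum_indicator_eq_sum_filter]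
    simp [mul_comm]
  simp only [T, this, fker]
  rw [mul_comm ((((S x).filter (fun y => y ∈ B)).card : ℝ≥0∞)) c,
    mul_div_assoc]

lemma T_lintegral (m : ℕ) (hcard : ∀ x, 1 ≤ (S x).card ∧ (S x).card ≤ m)
    (hmeas : ∀ B : Set X, MeasurableSet B → ∀ k l : ℕ, MeasurableSet (preimKL S k l B))
    (hpres : ∀ B : Set X, MeasurableSet B → ∫⁻ x, fker S x B ∂μ = μ B)
    {g : X → ℝ≥0∞} (hg : Measurable g) :
    Measurable (T S g) ∧ ∫⁻ x, T S g x ∂μ = ∫⁻ x, g x ∂μ := by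
  refine Measurable.ennreal_induction
    (motive := fun g => Measurable (T S g) ∧ ∫⁻ x, T S g x ∂μ = ∫⁻ x, g x ∂μ)
    (fun c B hB => ?_) (fun f g hdisj hf hg ihf ihg => ?_)
    (fun f hfm hmono ih => ?_) hg
  · rw [T_indicator]
    constructor
    · exact measurable_const.mul (meas_fker hB hmeas)
    · rw [lintegral_const_mul c (meas_fker hB hmeas), hpres B hB,
        lintegral_indicator_const hB]
  · have hT : T S (f + g) = T S f + T S g := by
      funext x
      simp only [T, Pi.add_apply, Finset.sum_add_distrib, ENNReal.add_div]
    rw [hT]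
    constructor
    · exact ihf.1.add ihg.1
    · simp only [Pi.add_apply]
      rw [lintegral_add_left ihf.1, ihf.2, ihg.2, lintegral_add_left hf]
  · dsimp only
    have hT : T S (fun x => ⨆ n, f n x) = fun x => ⨆ n, T S (f n) x := by
      funext x
      simp only [T]
      rw [ENNReal.finsetSum_iSup_of_monotone (fun y i j hij => hmono hij y),
        ENNReal.iSup_div]
    rw [hT]
    have hTmono : Monotone fun n => T S (f n) := by
      intro i j hij x
      exact ENNReal.div_le_div_right
        (Finset.sum_le_sum fun y _ => hmono hij y) _
    constructor
    · exact Measurable.iSup fun n => (ih n).1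
    · rw [lintegral_iSup (fun n => (ih n).1) hTmono,
        lintegral_iSup hfm hmono]
      exact iSup_congr fun n => (ih n).2

/-- for a null measurable set, almost every `x` has `S x` disjoint from it. -/
lemma ae_not_hits (m : ℕ) (hcard : ∀ x, 1 ≤ (S x).card ∧ (S x).card ≤ m)
    (hmeas : ∀ B : Set X, MeasurableSet B → ∀ k l : ℕ, MeasurableSet (preimKL S k l B))
    (hpres : ∀ B : Set X, MeasurableSet B → ∫⁻ x, fker S x B ∂μ = μ B)
    {N : Set X} (hN : MeasurableSet N) (hN0 : μ N = 0) :
    ∀ᵐ x ∂μ, ∀ y ∈ S x, y ∉ N := by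
  have h0 : ∫⁻ x, fker S x N ∂μ = 0 := by rw [hpres N hN, hN0]
  have hk := meas_fker hN hmeas (S := S)
  have hz : (fun x => fker S x N) =ᵐ[μ] 0 := (lintegral_eq_zero_iff hk).mp h0
  filter_upwards [hz] with x hx
  simp only [fker, Pi.zero_apply, ENNReal.div_eq_zero_iff] at hx
  rcases hx with hx | hx
  · have : ((S x).filter (fun y => y ∈ N)).card = 0 := by exact_mod_cast hx
    rw [Finset.card_eq_zero, Finset.filter_eq_empty_iff] at this
    exact this
  · exact absurd hx (ENNReal.natCast_ne_top _)

lemma koop_congr (m : ℕ) (hcard : ∀ x, 1 ≤ (S x).card ∧ (S x).card ≤ m)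
    (hmeas : ∀ B : Set X, MeasurableSet B → ∀ k l : ℕ, MeasurableSet (preimKL S k l B))
    (hpres : ∀ B : Set X, MeasurableSet B → ∫⁻ x, fker S x B ∂μ = μ B)
    {f g : X → ℝ} (h : f =ᵐ[μ] g) : koop S f =ᵐ[μ] koop S g := by
  obtain ⟨N, hsub, hNm, hN0⟩ := exists_measurable_superset_of_null h
  filter_upwards [ae_not_hits m hcard hmeas hpres hNm hN0] with x hx
  have : ∀ y ∈ S x, f y = g y := by
    intro y hy
    by_contra hne
    exact hx y hy (hsub hne)
  simp only [koop, Finset.sum_congr rfl this]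

lemma koop_nnnorm_le {m : ℕ} (hcard : ∀ x, 1 ≤ (S x).card ∧ (S x).card ≤ m)
    (f : X → ℝ) (x : X) :
    (‖koop S f x‖₊ : ℝ≥0∞) ≤ T S (fun y => (‖f y‖₊ : ℝ≥0∞)) x := by
  have hn : ((S x).card : ℝ≥0) ≠ 0 := by
    have := (hcard x).1
    simp only [ne_eq, Nat.cast_eq_zero]
    omega
  have h1 : (‖koop S f x‖₊ : ℝ≥0∞)
      = (‖∑ y ∈ S x, f y‖₊ : ℝ≥0∞) / ((S x).card : ℝ≥0∞) := by
    rw [koop, nnnorm_div]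
    rw [ENNReal.coe_div (by simpa using hn)]
    norm_num
  rw [h1]
  refine ENNReal.div_le_div_right ?_ _
  calc (‖∑ y ∈ S x, f y‖₊ : ℝ≥0∞) ≤ ((∑ y ∈ S x, ‖f y‖₊ : ℝ≥0) : ℝ≥0∞) :=
        ENNReal.coe_le_coe.mpr (nnnorm_sum_le _ _)
    _ = ∑ y ∈ S x, (‖f y‖₊ : ℝ≥0∞) := ENNReal.coe_finset_sum _ _

lemma T_rpow_le {m : ℕ} (hcard : ∀ x, 1 ≤ (S x).card ∧ (S x).card ≤ m)
    (g : X → ℝ≥0∞) {p : ℝ} (hp : 1 ≤ p) (x : X) :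
    (T S g x) ^ p ≤ T S (fun y => g y ^ p) x := by
  have hn0 : ((S x).card : ℝ≥0∞) ≠ 0 := card_ne_zero hcard x
  have hnt : ((S x).card : ℝ≥0∞) ≠ ⊤ := ENNReal.natCast_ne_top _
  have hw : ∑ _y ∈ S x, ((S x).card : ℝ≥0∞)⁻¹ = 1 := by
    rw [Finset.sum_const, nsmul_eq_mul, ENNReal.mul_inv_cancel hn0 hnt]
  have hdiv : ∀ h : X → ℝ≥0∞,
      T S h x = ∑ y ∈ S x, ((S x).card : ℝ≥0∞)⁻¹ * h y := by
    intro h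
    simp only [T, div_eq_mul_inv, Finset.sum_mul]
    exact Finset.sum_congr rfl fun y _ => mul_comm _ _
  rw [hdiv g, hdiv (fun y => g y ^ p)]
  exact ENNReal.rpow_arith_mean_le_arith_mean_rpow (S x) _ g hw hp

end KoopAux

open KoopAux

/-- for a μ-preserving m-transformation, the Koopman operator `U` is a
positive linear contraction on `L^p(μ)` for every `1 ≤ p ≤ ∞`. -/
theorem koopman_contraction {X : Type*} [MeasurableSpace X] (μ : Measure X)
    [IsProbabilityMeasure μ] (m : ℕ) (hm : 0 < m) (S : X → Finset X)
    (hcard : ∀ x, 1 ≤ (S x).card ∧ (S x).card ≤ m)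
    (hmeas : ∀ B : Set X, MeasurableSet B → ∀ k l : ℕ, MeasurableSet (preimKL S k l B))
    (hpres : ∀ B : Set X, MeasurableSet B → ∫⁻ x, fker S x B ∂μ = μ B) :
    (∀ f g : X → ℝ, koop S (f + g) = koop S f + koop S g) ∧
    (∀ (c : ℝ) (f : X → ℝ), koop S (c • f) = c • koop S f) ∧
    (∀ f : X → ℝ, (∀ x, 0 ≤ f x) → ∀ x, 0 ≤ koop S f x) ∧
    (∀ p : ℝ≥0∞, 1 ≤ p → ∀ f : X → ℝ, MemLp f p μ →
      eLpNorm (koop S f) p μ ≤ eLpNorm f p μ) := by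
  refine ⟨?_, ?_, ?_, ?_⟩
  · intro f g
    funext x
    simp [koop, Finset.sum_add_distrib, add_div]
  · intro c f
    funext x
    simp only [koop, Pi.smul_apply, smul_eq_mul, ← Finset.mul_sum, mul_div_assoc]
  · intro f hf x
    exact div_nonneg (Finset.sum_nonneg fun y _ => hf y) (Nat.cast_nonneg _)
  · intro p hp f hf
    -- replace `f` by a measurable representative
    obtain ⟨g, hgmeas, hfg⟩ :
        ∃ g : X → ℝ, Measurable g ∧ f =ᵐ[μ] g :=
      ⟨hf.aestronglyMeasurable.mk f,
        hf.aestronglyMeasurable.stronglyMeasurable_mk.measurable,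
        hf.aestronglyMeasurable.ae_eq_mk⟩
    rw [eLpNorm_congr_ae hfg,
      eLpNorm_congr_ae (koop_congr m hcard hmeas hpres hfg)]
    by_cases hptop : p = ∞
    · -- case p = ∞
      subst hptop
      set C := eLpNormEssSup g μ with hC
      have hae : ∀ᵐ y ∂μ, (‖g y‖₊ : ℝ≥0∞) ≤ C := ae_le_eLpNormEssSup
      set N : Set X := {y | C < (‖g y‖₊ : ℝ≥0∞)} with hNdef
      have hNm : MeasurableSet N :=
        measurableSet_lt measurable_const hgmeas.nnnorm.coe_nnreal_ennreal
      have hN0 : μ N = 0 := by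
        have := ae_iff.mp hae
        simpa [hNdef, not_le] using this
      have key := ae_not_hits (μ := μ) m hcard hmeas hpres hNm hN0
      rw [eLpNorm_exponent_top, eLpNorm_exponent_top]
      rw [eLpNormEssSup]
      refine essSup_le_of_ae_le _ ?_
      filter_upwards [key] with x hx
      calc (‖koop S g x‖₊ : ℝ≥0∞)
          ≤ T S (fun y => (‖g y‖₊ : ℝ≥0∞)) x := koop_nnnorm_le hcard g x
        _ ≤ C := by
          have hb : ∀ y ∈ S x, (‖g y‖₊ : ℝ≥0∞) ≤ C := fun y hy =>
            not_lt.mp (by simpa [hNdef] using hx y hy)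
          have hsum : ∑ y ∈ S x, (‖g y‖₊ : ℝ≥0∞) ≤ C * ((S x).card : ℝ≥0∞) := by
            calc ∑ y ∈ S x, (‖g y‖₊ : ℝ≥0∞) ≤ ∑ _y ∈ S x, C :=
                  Finset.sum_le_sum hb
              _ = C * ((S x).card : ℝ≥0∞) := by
                  rw [Finset.sum_const, nsmul_eq_mul, mul_comm]
          rw [T, ENNReal.div_le_iff (card_ne_zero hcard x) (ENNReal.natCast_ne_top _)]
          exact hsum
    · -- case p < ∞
      have hp0 : p ≠ 0 := by
        intro h; rw [h] at hp; exact absurd hp (by simp)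
      have hpr1 : 1 ≤ p.toReal := by
        rw [← ENNReal.ofReal_one, ← ENNReal.ofReal_toReal hptop] at hp
        exact (ENNReal.ofReal_le_ofReal_iff (ENNReal.toReal_nonneg)).mp hp
      have hpr0 : 0 < p.toReal := lt_of_lt_of_le one_pos hpr1
      rw [eLpNorm_eq_lintegral_rpow_enorm_toReal hp0 hptop,
        eLpNorm_eq_lintegral_rpow_enorm_toReal hp0 hptop]
      simp only [enorm_eq_nnnorm]
      refine ENNReal.rpow_le_rpow ?_ (by positivity)
      set h : X → ℝ≥0∞ := fun y => (‖g y‖₊ : ℝ≥0∞) ^ p.toReal with hh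
      have hhm : Measurable h :=
        (hgmeas.nnnorm.coe_nnreal_ennreal).pow_const _
      obtain ⟨hTmeas, hTint⟩ := T_lintegral (μ := μ) m hcard hmeas hpres hhm
      calc ∫⁻ x, (‖koop S g x‖₊ : ℝ≥0∞) ^ p.toReal ∂μ
          ≤ ∫⁻ x, T S h x ∂μ := by
            refine lintegral_mono fun x => ?_
            calc (‖koop S g x‖₊ : ℝ≥0∞) ^ p.toReal
                ≤ (T S (fun y => (‖g y‖₊ : ℝ≥0∞)) x) ^ p.toReal :=
                  ENNReal.rpow_le_rpow (koop_nnnorm_le hcard g x) hpr0.le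
              _ ≤ T S h x := T_rpow_le hcard _ hpr1 x
        _ = ∫⁻ x, h x ∂μ := hTint
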